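/- Let ℓ be a prime, r ≥ 1, and N = d·ℓʳ − 1 with gcd(d,ℓ)=1. Let M be a free ℤ/ℓʳ-module and Φ̄ : M^N → M^N be given by Φ̄(α)_t = α_{t−1} − 2α_t + α_{t+1} (α₀ = α_{N+1} = 0). Then ker(Φ̄) ≅ M, via α ↦ (α, 2α, …, Nα). -/
import Mathlib


/-- For `N = d·ℓʳ − 1` with `gcd(d, ℓ) = 1` and `M` a free `ℤ/ℓʳ`-module, the
kernel of the tridiagonal map `Φ̄` on `M^N` is isomorphic to `M` via
`α ↦ (α, 2α, …, Nα)`. -/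
theorem ker_discrete_laplacian_zmod (ℓ : ℕ) (hℓ : ℓ.Prime) (r d : ℕ) (hr : 1 ≤ r)
    (hd : 1 ≤ d) (hcop : ¬ ℓ ∣ d) (N : ℕ) (hN : N = d * ℓ ^ r - 1)
    (M : Type*) [AddCommGroup M] [Module (ZMod (ℓ ^ r)) M]
    [Module.Free (ZMod (ℓ ^ r)) M]
    (e : (Fin N → M) → ℕ → M)
    (he : ∀ α j, e α j = if h : 1 ≤ j ∧ j ≤ N then α ⟨j - 1, by omega⟩ else 0)
    (Φ : (Fin N → M) → Fin N → M)
    (hΦ : ∀ α t, Φ α t = e α t.1 - 2 • e α (t.1 + 1) + e α (t.1 + 2)) :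
    ∀ β : Fin N → M, Φ β = 0 ↔ ∃! α : M, ∀ t : Fin N, β t = (t.1 + 1) • α := by
  have hℓ2 : 2 ≤ ℓ ^ r := le_trans hℓ.two_le (Nat.le_self_pow (by omega) ℓ)
  have hNpos : 1 ≤ N := by
    have : 2 ≤ d * ℓ ^ r := le_trans hℓ2 (Nat.le_mul_of_pos_left _ hd)
    omega
  have hN1 : N + 1 = d * ℓ ^ r := by
    have : 2 ≤ d * ℓ ^ r := le_trans hℓ2 (Nat.le_mul_of_pos_left _ hd)
    omega
  have hkill : ∀ x : M, (N + 1) • x = 0 := by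
    intro x
    rw [hN1, ← Nat.cast_smul_eq_nsmul (ZMod (ℓ ^ r))]
    rw [Nat.cast_mul, ZMod.natCast_self, mul_zero, zero_smul]
  intro β
  set b : ℕ → M := e β with hb
  have hb0 : b 0 = 0 := by rw [hb, he]; rw [dif_neg (by omega)]
  have hbN1 : b (N + 1) = 0 := by rw [hb, he]; rw [dif_neg (by omega)]
  have hβb : ∀ t : Fin N, β t = b (t.1 + 1) := by
    intro t
    rw [hb, he, dif_pos ⟨by omega, by omega⟩]
    exact congrArg β (Fin.ext (by simp)).symm
  constructor
  · intro h0
    have heq : ∀ t, t < N → b t - 2 • b (t + 1) + b (t + 2) = 0 := by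
      intro t ht
      have := congrFun h0 ⟨t, ht⟩
      rw [hΦ] at this
      simpa using this
    have key : ∀ j, j ≤ N → b j = j • b 1 := by
      intro j
      induction j using Nat.strong_induction_on with
      | _ j ih =>
        match j with
        | 0 => intro _; rw [hb0, zero_smul]
        | 1 => intro _; rw [one_smul]
        | (k + 2) =>
          intro hj
          have e1 := heq k (by omega)
          rw [ih k (by omega) (by omega), ih (k + 1) (by omega) (by omega)] at e1
          have h2 : (k : ℕ) • b 1 + (k + 2) • b 1 = 2 • ((k + 1) • b 1) := by
            rw [← add_nsmul, smul_smul]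
            congr 1
            omega
          have e2 : (k : ℕ) • b 1 - 2 • ((k+1) • b 1) + b (k + 2)
              = ((k : ℕ) • b 1 + b (k + 2)) - 2 • ((k+1) • b 1) := by abel
          rw [e2] at e1
          have : b (k + 2) = 2 • ((k+1) • b 1) - (k : ℕ) • b 1 := by
            have := sub_eq_zero.mp e1
            rw [← this]; abel
          rw [this, smul_smul]
          have : 2 * (k + 1) = (k + 2) + k := by omega
          rw [this, add_nsmul]
          abel
    refine ⟨b 1, ?_, ?_⟩
    · intro t
      rw [hβb t, key (t.1 + 1) (by omega)]
    · intro y hy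
      have h1 := hy ⟨0, hNpos⟩
      rw [hβb ⟨0, hNpos⟩] at h1
      simpa using h1.symm
  · rintro ⟨α, hα, -⟩
    have hbv : ∀ j, j ≤ N + 1 → b j = j • α := by
      intro j hj
      rcases Nat.eq_zero_or_pos j with h0 | h1
      · rw [h0, hb0, zero_smul]
      · rcases Nat.lt_or_ge j (N + 1) with hlt | hge
        · rw [hb, he, dif_pos ⟨by omega, by omega⟩, hα ⟨j - 1, by omega⟩]
          congr 1
          simp only [Fin.val_mk]
          omega
        · have : j = N + 1 := by omega
          rw [this, hbN1, hkill]
    funext t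
    rw [Pi.zero_apply, hΦ, ← hb, hbv t.1 (by omega), hbv (t.1 + 1) (by omega),
      hbv (t.1 + 2) (by omega)]
    have h2 : (t.1 : ℕ) • α + (t.1 + 2) • α = 2 • ((t.1 + 1) • α) := by
      rw [← add_nsmul, smul_smul]
      congr 1
      omega
    calc (t.1 : ℕ) • α - 2 • ((t.1 + 1) • α) + (t.1 + 2) • α
        = ((t.1 : ℕ) • α + (t.1 + 2) • α) - 2 • ((t.1 + 1) • α) := by abel
      _ = 0 := by rw [h2, sub_self]
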